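/- (Approximate Intermediate Value Theorem.) Let S be a convex subset of ℝ, let δ, ε > 0, and let f : S → ℝ satisfy: for all x, x' ∈ S, |x − x'| < δ implies |f(x) − f(x')| < ε. If a, c ∈ S with a ≤ c, and s is a real number lying between f(a) and f(c) (i.e., min(f(a),f(c)) ≤ s ≤ max(f(a),f(c))), then there exists b with a ≤ b ≤ c and |f(b) − s| < ε/2. -/

import Mathlib

lemma approx_ivt_aux
    (S : Set ℝ) (hS : Convex ℝ S)
    (δ ε : ℝ) (hδ : 0 < δ) (hε : 0 < ε)
    (f : ℝ → ℝ)
    (hf : ∀ x ∈ S, ∀ x' ∈ S, |x - x'| < δ → |f x - f x'| < ε)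
    (a c : ℝ) (ha : a ∈ S) (hc : c ∈ S) (hac : a ≤ c)
    (s : ℝ) (h1 : f a ≤ s) (h2 : s ≤ f c) :
    ∃ b ∈ Set.Icc a c, |f b - s| < ε / 2 := by
  classical
  obtain ⟨n, hn⟩ := exists_nat_gt ((c - a) / δ)
  have hca : 0 ≤ c - a := by linarith
  have hn0 : 0 < (n : ℝ) := lt_of_le_of_lt (div_nonneg hca hδ.le) hn
  have hnn : 0 < n := by exact_mod_cast hn0
  have hstep : (c - a) / n < δ := by
    rw [div_lt_iff₀ hn0]
    nlinarith [(div_lt_iff₀ hδ).mp hn]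
  set x : ℕ → ℝ := fun i => a + i * ((c - a) / n) with hx
  have hx0 : x 0 = a := by simp [hx]
  have hxn : x n = c := by
    simp only [hx]
    field_simp
    ring
  have hmem : ∀ i ≤ n, x i ∈ Set.Icc a c := by
    intro i hi
    have h1 : (0:ℝ) ≤ i * ((c - a) / n) :=
      mul_nonneg (Nat.cast_nonneg i) (div_nonneg hca hn0.le)
    have h2 : (i:ℝ) * ((c - a) / n) ≤ (n:ℝ) * ((c - a) / n) := by
      apply mul_le_mul_of_nonneg_right _ (div_nonneg hca hn0.le)
      exact_mod_cast hi
    have h3 : (n:ℝ) * ((c - a) / n) = c - a := by field_simp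
    constructor <;> simp only [hx] <;> nlinarith
  have hmemS : ∀ i ≤ n, x i ∈ S := fun i hi =>
    hS.ordConnected.out ha hc (hmem i hi)
  have hdiff : ∀ i, i + 1 ≤ n → |f (x (i+1)) - f (x i)| < ε := by
    intro i hi
    apply hf _ (hmemS _ hi) _ (hmemS _ (le_of_lt hi))
    have : x (i+1) - x i = (c - a) / n := by
      simp only [hx]
      push_cast
      ring
    rw [this, abs_of_nonneg (div_nonneg hca hn0.le)]
    exact hstep
  have hex : ∃ i, s ≤ f (x i) ∧ i ≤ n := ⟨n, by rw [hxn]; exact h2, le_refl n⟩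
  have hfi : s ≤ f (x (Nat.find hex)) := (Nat.find_spec hex).1
  have hin : Nat.find hex ≤ n := (Nat.find_spec hex).2
  rcases Nat.eq_zero_or_pos (Nat.find hex) with h0 | hpos
  · rw [h0, hx0] at hfi
    refine ⟨a, ⟨le_refl a, hac⟩, ?_⟩
    rw [le_antisymm h1 hfi]
    simpa using half_pos hε
  · obtain ⟨j, hj⟩ : ∃ j, Nat.find hex = j + 1 := ⟨Nat.find hex - 1, by omega⟩
    rw [hj] at hfi hin
    have hjlt : ¬ (s ≤ f (x j) ∧ j ≤ n) := Nat.find_min hex (by omega)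
    have hjn : j ≤ n := by omega
    have hfj : f (x j) < s := by
      by_contra h
      exact hjlt ⟨le_of_not_gt h, hjn⟩
    have hd' : f (x (j+1)) - f (x j) < ε := (abs_lt.mp (hdiff j hin)).2
    by_cases hcase : f (x (j+1)) - s < ε / 2
    · refine ⟨x (j+1), hmem _ hin, ?_⟩
      rw [abs_of_nonneg (by linarith)]
      exact hcase
    · refine ⟨x j, hmem _ hjn, ?_⟩
      rw [abs_of_nonpos (by linarith)]
      linarith

/-- Approximate Intermediate Value Theorem: if `f` is `(δ,ε)`-constrained on a convex
`S ⊆ ℝ`, `a ≤ c` in `S`, and `s` lies between `f(a)` and `f(c)`, then some `b ∈ [a,c]`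
has `|f(b) − s| < ε/2`. -/
theorem approx_intermediate_value
    (S : Set ℝ) (hS : Convex ℝ S)
    (δ ε : ℝ) (hδ : 0 < δ) (hε : 0 < ε)
    (f : ℝ → ℝ)
    (hf : ∀ x ∈ S, ∀ x' ∈ S, |x - x'| < δ → |f x - f x'| < ε)
    (a c : S) (hac : (a : ℝ) ≤ c)
    (s : ℝ) (hs1 : min (f a) (f c) ≤ s) (hs2 : s ≤ max (f a) (f c)) :
    ∃ b ∈ Set.Icc (a : ℝ) (c : ℝ), |f b - s| < ε / 2 := by
  rcases le_total (f a) (f c) with h | h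
  · rw [min_eq_left h] at hs1
    rw [max_eq_right h] at hs2
    exact approx_ivt_aux S hS δ ε hδ hε f hf a c a.2 c.2 hac s hs1 hs2
  · rw [min_eq_right h] at hs1
    rw [max_eq_left h] at hs2
    obtain ⟨b, hb, hb2⟩ := approx_ivt_aux S hS δ ε hδ hε (fun x => -(f x))
      (fun x hx x' hx' hxx => by
        have := hf x hx x' hx' hxx
        rwa [show -f x - -f x' = -(f x - f x') by ring, abs_neg])
      a c a.2 c.2 hac (-s) (by simpa using hs2) (by simpa using hs1)
    refine ⟨b, hb, ?_⟩
    rwa [show -f b - -s = -(f b - s) by ring, abs_neg] at hb2
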